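/- Let f : V → {1,…,k} be a uniformly random independent coloring of four distinct nodes u, v, w, x. Consider a Type 2 triangle pair: triangle {u,v,w} whose last edge is {v,w} (responsible worker = f(u) if f(v) ≠ f(w), else f(v)), and triangle {u,v,x} whose last edge is {x,u} (responsible worker = f(v) if f(x) ≠ f(u), else f(x)). Then for any fixed color i, the probability that both triangles are assigned to worker i equals (3k² − 4k + 2)/k⁴, which is O(1/k²). -/

import Mathlib

open Finset

private lemma type2_countD (k : ℕ) (i a b : Fin k) :
    (univ.filter (fun d : Fin k => (if d = a then d else b) = i)).card
      = (if a = i then 1 else 0) + (k - 1) * (if b = i then 1 else 0) := by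
  have hk : 1 ≤ k := i.pos
  by_cases ha : a = i <;> by_cases hb : b = i
  · have h : (univ.filter (fun d : Fin k => (if d = a then d else b) = i)) = univ := by
      ext d; by_cases hd : d = a <;> simp [hd, ha, hb]
    rw [h, card_univ, Fintype.card_fin]; simp [ha, hb]; omega
  · have h : (univ.filter (fun d : Fin k => (if d = a then d else b) = i)) = {a} := by
      ext d; by_cases hd : d = a
      · simp [hd, ha, hb]
      · have hd' : d ≠ i := ha ▸ hd
        simp [hd, hd', ha, hb]
    rw [h, card_singleton]; simp [ha, hb]
  · have h : (univ.filter (fun d : Fin k => (if d = a then d else b) = i)) = univ.erase a := by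
      ext d; by_cases hd : d = a <;> simp [hd, ha, hb]
    rw [h, card_erase_of_mem (mem_univ a), card_univ, Fintype.card_fin]; simp [ha, hb]
  · have h : (univ.filter (fun d : Fin k => (if d = a then d else b) = i)) = ∅ := by
      ext d; by_cases hd : d = a <;> simp [hd, ha, hb]
    rw [h]; simp [ha, hb]

private lemma type2_countC (k : ℕ) (i a b : Fin k) :
    (univ.filter (fun c : Fin k => (if b = c then b else a) = i)).card
      = (if b = i then 1 else 0) + (k - 1) * (if a = i then 1 else 0) := by
  have h : ∀ c : Fin k, (if b = c then b else a) = (if c = b then c else a) := by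
    intro c; by_cases hc : c = b <;> simp [hc, eq_comm (a := b) (b := c), hc]
  simp only [h]
  rw [type2_countD k i b a]

private lemma type2_quadCount (k : ℕ) (i : Fin k) :
    ((univ : Finset (Fin k × Fin k × Fin k × Fin k)).filter
      (fun q => (if q.2.1 = q.2.2.1 then q.2.1 else q.1) = i ∧
                (if q.2.2.2 = q.1 then q.2.2.2 else q.2.1) = i)).card
      = 1 + 2 * (k * (k - 1)) + (k - 1) * (k - 1) := by
  rw [Finset.card_filter]
  rw [Fintype.sum_prod_type]
  simp only [Fintype.sum_prod_type]
  have key : ∀ a b : Fin k,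
      (∑ c : Fin k, ∑ d : Fin k,
        if (if b = c then b else a) = i ∧ (if d = a then d else b) = i then (1:ℕ) else 0)
      = ((if b = i then 1 else 0) + (k - 1) * (if a = i then 1 else 0)) *
        ((if a = i then 1 else 0) + (k - 1) * (if b = i then 1 else 0)) := by
    intro a b
    have : ∀ c d : Fin k,
        (if (if b = c then b else a) = i ∧ (if d = a then d else b) = i then (1:ℕ) else 0)
        = (if (if b = c then b else a) = i then 1 else 0) *
          (if (if d = a then d else b) = i then 1 else 0) := by
      intro c d
      by_cases h1 : (if b = c then b else a) = i <;> by_cases h2 : (if d = a then d else b) = i <;>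
        simp [h1, h2]
    simp only [this]
    rw [← Finset.sum_mul_sum]
    rw [Finset.sum_boole, Finset.sum_boole]
    push_cast
    rw [type2_countC k i a b, type2_countD k i a b]
  simp only [key]
  have expand : ∀ a b : Fin k,
      ((if b = i then 1 else 0) + (k - 1) * (if a = i then 1 else 0)) *
      ((if a = i then 1 else 0) + (k - 1) * (if b = i then 1 else 0))
      = (if b = i then 1 else 0) * (if a = i then 1 else 0)
        + (k-1) * ((if b = i then (1:ℕ) else 0))
        + (k-1) * ((if a = i then (1:ℕ) else 0))
        + (k-1)*(k-1) * ((if a = i then 1 else 0) * (if b = i then 1 else 0)) := by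
    intro a b
    by_cases ha : a = i <;> by_cases hb : b = i <;> simp [ha, hb] <;> ring
  simp only [expand]
  simp only [Finset.sum_add_distrib, ← Finset.mul_sum, Finset.sum_const, Finset.sum_ite_eq',
    Finset.mem_univ, if_true, smul_eq_mul, Finset.sum_ite_eq]
  simp [Fintype.card_fin]
  ring_nf

private lemma type2_fiber_card_eq {V : Type*} [Fintype V] [DecidableEq V] {k : ℕ} (u v w x : V)
    (huv : u ≠ v) (huw : u ≠ w) (hux : u ≠ x)
    (hvw : v ≠ w) (hvx : v ≠ x) (hwx : w ≠ x)
    (q q' : Fin k × Fin k × Fin k × Fin k) :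
    ((univ : Finset (V → Fin k)).filter (fun f => (f u, f v, f w, f x) = q)).card
      = ((univ : Finset (V → Fin k)).filter (fun f => (f u, f v, f w, f x) = q')).card := by
  set upd : (Fin k × Fin k × Fin k × Fin k) → (V → Fin k) → (V → Fin k) :=
    fun p f => Function.update (Function.update (Function.update
      (Function.update f u p.1) v p.2.1) w p.2.2.1) x p.2.2.2 with hupd
  have hu : ∀ p f, upd p f u = p.1 := by
    intro p f
    simp [hupd, Function.update_of_ne hux, Function.update_of_ne huw,
      Function.update_of_ne huv]
  have hv : ∀ p f, upd p f v = p.2.1 := by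
    intro p f
    simp [hupd, Function.update_of_ne hvx, Function.update_of_ne hvw]
  have hw : ∀ p f, upd p f w = p.2.2.1 := by
    intro p f
    simp [hupd, Function.update_of_ne hwx]
  have hx : ∀ p f, upd p f x = p.2.2.2 := by
    intro p f
    simp [hupd]
  have hother : ∀ p f y, y ≠ u → y ≠ v → y ≠ w → y ≠ x → upd p f y = f y := by
    intro p f y h1 h2 h3 h4
    simp [hupd, Function.update_of_ne h1, Function.update_of_ne h2,
      Function.update_of_ne h3, Function.update_of_ne h4]
  have inv : ∀ p p' f, (f u, f v, f w, f x) = p → upd p (upd p' f) = f := by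
    intro p p' f hf
    simp only [Prod.ext_iff] at hf
    funext y
    by_cases h1 : y = u
    · subst h1; rw [hu]; exact hf.1.symm
    by_cases h2 : y = v
    · subst h2; rw [hv]; exact hf.2.1.symm
    by_cases h3 : y = w
    · subst h3; rw [hw]; exact hf.2.2.1.symm
    by_cases h4 : y = x
    · subst h4; rw [hx]; exact hf.2.2.2.symm
    · rw [hother p _ y h1 h2 h3 h4, hother p' f y h1 h2 h3 h4]
  refine Finset.card_nbij' (upd q') (upd q) ?_ ?_ ?_ ?_
  · intro f hf; simp only [mem_coe, mem_filter, mem_univ, true_and]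
    rw [hu, hv, hw, hx]
  · intro f hf; simp only [mem_coe, mem_filter, mem_univ, true_and]
    rw [hu, hv, hw, hx]
  · intro f hf; simp only [mem_coe, mem_filter, mem_univ, true_and] at hf
    exact inv q q' f hf
  · intro f hf; simp only [mem_coe, mem_filter, mem_univ, true_and] at hf
    exact inv q' q f hf

/-- Type 2 triangle pair collision probability. For four distinct nodes `u,v,w,x`
colored independently and uniformly with `k` colors: triangle `{u,v,w}` with last
edge `{v,w}` is assigned to `f(u)` if `f(v) ≠ f(w)` and to `f(v)` otherwise;
triangle `{u,v,x}` with last edge `{x,u}` is assigned to `f(v)` if `f(x) ≠ f(u)`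
and to `f(x)` otherwise. For any fixed color `i`, the probability that both
triangles are assigned to worker `i` equals `(3k² − 4k + 2)/k⁴`,
which is `O(1/k²)` (at most `3/k²`). -/
theorem type2_pair_collision_prob {V : Type*} [Fintype V] [DecidableEq V]
    (k : ℕ) (hk : 1 ≤ k) (u v w x : V)
    (huv : u ≠ v) (huw : u ≠ w) (hux : u ≠ x)
    (hvw : v ≠ w) (hvx : v ≠ x) (hwx : w ≠ x) (i : Fin k) :
    (((Finset.univ : Finset (V → Fin k)).filter
        (fun f => (if f v = f w then f v else f u) = i ∧
                  (if f x = f u then f x else f v) = i)).card : ℚ) /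
      (((Finset.univ : Finset (V → Fin k)).card : ℚ))
      = (3 * (k : ℚ) ^ 2 - 4 * (k : ℚ) + 2) / (k : ℚ) ^ 4 ∧
    (3 * (k : ℚ) ^ 2 - 4 * (k : ℚ) + 2) / (k : ℚ) ^ 4 ≤ 3 / (k : ℚ) ^ 2 := by
  have hkQ : (1:ℚ) ≤ (k:ℚ) := by exact_mod_cast hk
  have hkpos : (0:ℚ) < (k:ℚ) := by linarith
  set φ : (V → Fin k) → Fin k × Fin k × Fin k × Fin k := fun f => (f u, f v, f w, f x) with hφ
  set C : ℕ := ((univ : Finset (V → Fin k)).filter (fun f => φ f = (i, i, i, i))).card with hC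
  have hfiber : ∀ q : Fin k × Fin k × Fin k × Fin k,
      ((univ : Finset (V → Fin k)).filter (fun f => φ f = q)).card = C := by
    intro q
    exact type2_fiber_card_eq u v w x huv huw hux hvw hvx hwx q (i, i, i, i)
  have hCpos : 0 < C := by
    rw [hC]
    apply Finset.card_pos.mpr
    exact ⟨fun _ => i, by simp [hφ]⟩
  set M : ℕ := ((univ : Finset (Fin k × Fin k × Fin k × Fin k)).filter
      (fun q => (if q.2.1 = q.2.2.1 then q.2.1 else q.1) = i ∧
                (if q.2.2.2 = q.1 then q.2.2.2 else q.2.1) = i)).card with hM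
  -- total count
  have htotal : ((univ : Finset (V → Fin k)).card) = k ^ 4 * C := by
    rw [Finset.card_eq_sum_card_fiberwise
      (f := φ) (t := (univ : Finset (Fin k × Fin k × Fin k × Fin k)))
      (fun f _ => mem_univ _)]
    simp only [hfiber, Finset.sum_const, smul_eq_mul, card_univ]
    congr 1
    simp [Fintype.card_prod, Fintype.card_fin]
    ring
  -- filtered count
  have hfilter : (((Finset.univ : Finset (V → Fin k))).filter
        (fun f => (if f v = f w then f v else f u) = i ∧
                  (if f x = f u then f x else f v) = i)).card = M * C := by
    rw [Finset.card_eq_sum_card_fiberwise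
      (f := φ) (t := (univ : Finset (Fin k × Fin k × Fin k × Fin k)).filter
        (fun q => (if q.2.1 = q.2.2.1 then q.2.1 else q.1) = i ∧
                  (if q.2.2.2 = q.1 then q.2.2.2 else q.2.1) = i))
      (by intro f hf
          simp only [mem_coe, mem_filter, mem_univ, true_and] at hf ⊢
          exact hf)]
    have hff : ∀ q ∈ (univ : Finset (Fin k × Fin k × Fin k × Fin k)).filter
        (fun q => (if q.2.1 = q.2.2.1 then q.2.1 else q.1) = i ∧
                  (if q.2.2.2 = q.1 then q.2.2.2 else q.2.1) = i),
        ((((Finset.univ : Finset (V → Fin k))).filter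
          (fun f => (if f v = f w then f v else f u) = i ∧
                    (if f x = f u then f x else f v) = i)).filter (fun f => φ f = q)).card
        = C := by
      intro q hq
      simp only [mem_filter, mem_univ, true_and] at hq
      rw [Finset.filter_filter]
      have : ((univ : Finset (V → Fin k)).filter
          (fun f => ((if f v = f w then f v else f u) = i ∧
                    (if f x = f u then f x else f v) = i) ∧ φ f = q))
          = (univ : Finset (V → Fin k)).filter (fun f => φ f = q) := by
        ext f
        simp only [mem_filter, mem_univ, true_and, and_iff_right_iff_imp]
        intro hfq
        have h1 : f u = q.1 ∧ f v = q.2.1 ∧ f w = q.2.2.1 ∧ f x = q.2.2.2 := by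
          simpa [hφ, Prod.ext_iff] using hfq
        rw [h1.1, h1.2.1, h1.2.2.1, h1.2.2.2]
        exact hq
      rw [this, hfiber]
    rw [Finset.sum_congr rfl hff, Finset.sum_const, smul_eq_mul, ← hM]
  constructor
  · rw [hfilter, htotal]
    have hMval : M = 1 + 2 * (k * (k - 1)) + (k - 1) * (k - 1) := type2_quadCount k i
    have hCne : (C:ℚ) ≠ 0 := by exact_mod_cast hCpos.ne'
    push_cast
    rw [mul_div_mul_right _ _ hCne]
    rw [hMval]
    have hcast : ((1 + 2 * (k * (k - 1)) + (k - 1) * (k - 1) : ℕ) : ℚ)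
        = 3 * (k : ℚ) ^ 2 - 4 * (k : ℚ) + 2 := by
      push_cast [Nat.cast_sub hk]
      ring
    rw [hcast]
  · rw [div_le_div_iff₀ (by positivity) (by positivity)]
    nlinarith [sq_nonneg ((k:ℚ) - 1), hkQ, hkpos]
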